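/- arXiv:1910.07558 — 3 statements merged into one kernel-verified Lean document; each statement's English description precedes it below -/
import Mathlib

section
/- Let a be a hermitian element of a complex unital Banach algebra A and let φ be a continuous linear functional on A with ‖φ‖ = 1. Then the entire function F(z) = φ(exp(i a z)) = Σ_{n≥0} φ(aⁿ) zⁿ/n! has exponential type at most ρ(a), the spectral radius of a. -/
open Complex NormedSpace Filter

/-- If `a` is hermitian and `φ` is a norm-one continuous linear functional, then the
entire function `F z = φ(exp(i a z)) = ∑ φ(aⁿ) zⁿ/n!` has exponential type
`(1/e)·limsup n·|φ(aⁿ)/n!|^{1/n}` at most the spectral radius of `a`. -/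
theorem expType_le_spectralRadius_of_hermitian
    {A : Type*} [NormedRing A] [NormedAlgebra ℂ A] [CompleteSpace A] [NormOneClass A]
    (a : A) (ha : ∀ t : ℝ, ‖NormedSpace.exp ((Complex.I * (t : ℂ)) • a)‖ = 1)
    (φ : A →L[ℂ] ℂ) (hφ : ‖φ‖ = 1) :
    Filter.limsup
      (fun n : ℕ =>
        ENNReal.ofReal
          ((n : ℝ) * (‖φ (a ^ n)‖ / (n.factorial : ℝ)) ^ ((1 : ℝ) / n) / Real.exp 1))
      atTop ≤ spectralRadius ℂ a := by
  have hlim := spectrum.pow_norm_pow_one_div_tendsto_nhds_spectralRadius (A := A) a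
  rw [← hlim.limsup_eq]
  refine Filter.limsup_le_limsup ?_
  filter_upwards [Filter.eventually_ge_atTop 1] with n hn
  apply ENNReal.ofReal_le_ofReal
  have hn0 : (0:ℝ) < n := by exact_mod_cast hn
  have hb : ‖φ (a ^ n)‖ ≤ ‖a ^ n‖ := by
    calc ‖φ (a ^ n)‖ ≤ ‖φ‖ * ‖a ^ n‖ := φ.le_opNorm _
    _ = ‖a ^ n‖ := by rw [hφ, one_mul]
  -- n! ≥ (n/e)^n, i.e. 1/n! ≤ (e/n)^n
  have hfact : (1 : ℝ) / n.factorial ≤ (Real.exp 1 / n) ^ n := by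
    have h1 : (n : ℝ) ^ n / n.factorial ≤ Real.exp n :=
      Real.pow_div_factorial_le_exp (n:ℝ) n.cast_nonneg n
    have h2 : Real.exp (n : ℝ) = Real.exp 1 ^ n := by
      rw [← Real.exp_nat_mul, mul_one]
    have hfpos : (0:ℝ) < n.factorial := by exact_mod_cast n.factorial_pos
    rw [div_pow]
    rw [div_le_div_iff₀ hfpos (by positivity), one_mul]
    rw [h2] at h1
    calc (n : ℝ) ^ n ≤ Real.exp 1 ^ n * n.factorial := by
          rw [div_le_iff₀ hfpos] at h1; linarith
    _ = Real.exp 1 ^ n * n.factorial := rfl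
  have hkey : ‖φ (a ^ n)‖ / n.factorial ≤ ‖a ^ n‖ * (Real.exp 1 / n) ^ n := by
    have h3 : ‖φ (a ^ n)‖ / n.factorial = ‖φ (a ^ n)‖ * (1 / n.factorial) := by ring
    rw [h3]
    exact mul_le_mul hb hfact (by positivity) (norm_nonneg _)
  have hexp : (0:ℝ) ≤ 1 / n := by positivity
  have h4 : (‖φ (a ^ n)‖ / n.factorial) ^ ((1:ℝ)/n) ≤
      (‖a ^ n‖ * (Real.exp 1 / n) ^ n) ^ ((1:ℝ)/n) :=
    Real.rpow_le_rpow (by positivity) hkey hexp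
  have h5 : (‖a ^ n‖ * (Real.exp 1 / n) ^ n) ^ ((1:ℝ)/n)
      = ‖a ^ n‖ ^ ((1:ℝ)/n) * (Real.exp 1 / n) := by
    rw [Real.mul_rpow (norm_nonneg _) (by positivity), ← Real.rpow_natCast (Real.exp 1 / n) n,
      ← Real.rpow_mul (by positivity)]
    rw [mul_one_div_cancel (by exact_mod_cast hn0.ne' : (n:ℝ) ≠ 0), Real.rpow_one]
  rw [h5] at h4
  calc (n : ℝ) * (‖φ (a ^ n)‖ / n.factorial) ^ ((1:ℝ)/n) / Real.exp 1
      ≤ (n : ℝ) * (‖a ^ n‖ ^ ((1:ℝ)/n) * (Real.exp 1 / n)) / Real.exp 1 := by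
        gcongr
  _ = ‖a ^ n‖ ^ ((1:ℝ)/n) := by
        field_simp
end

section
/- For the functions g₊(t) = Σ_{k=1}^n 1/(t + ik) and g₋(t) = Σ_{k=1}^n 1/(t − ik) on ℝ, the sum g = g₊ + g₋ satisfies sup_ℝ |g| ≤ π, while sup_ℝ |g₋| ≥ |g₋(0)| = Σ_{k=1}^n 1/k ≥ log n. Hence the ratio sup|g₋| / sup|g| is at least (log n)/π. -/
open Complex Finset Real

lemma key_ineq (t : ℝ) (ht : 0 < t) (k : ℕ) (hk : 1 ≤ k) :
    t / (t ^ 2 + (k : ℝ) ^ 2) ≤ Real.arctan (k / t) - Real.arctan ((k - 1 : ℕ) / t) := by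
  have h1 : ((k - 1 : ℕ) : ℝ) = (k : ℝ) - 1 := by
    push_cast [hk]; ring
  rw [h1]
  have hle : ((k : ℝ) - 1) / t ≤ (k : ℝ) / t := by
    gcongr <;> linarith
  have hint : Real.arctan ((k : ℝ) / t) - Real.arctan (((k : ℝ) - 1) / t)
      = ∫ x in (((k : ℝ) - 1) / t)..((k : ℝ) / t), 1 / (1 + x ^ 2) := by
    rw [integral_one_div_one_add_sq]
  rw [hint]
  have hconst : t / (t ^ 2 + (k : ℝ) ^ 2)
      = ∫ _x in (((k : ℝ) - 1) / t)..((k : ℝ) / t), 1 / (1 + ((k : ℝ) / t) ^ 2) := by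
    rw [intervalIntegral.integral_const, smul_eq_mul]
    have : (k : ℝ) / t - ((k : ℝ) - 1) / t = 1 / t := by ring
    rw [this]
    have ht' : t ≠ 0 := ne_of_gt ht
    have hk1 : (1:ℝ) ≤ (k:ℝ) := by exact_mod_cast hk
    have hd : t ^ 2 + (k : ℝ) ^ 2 ≠ 0 := by nlinarith
    field_simp
  rw [hconst]
  apply intervalIntegral.integral_mono_on hle
  · exact intervalIntegrable_const
  · apply ContinuousOn.intervalIntegrable
    apply Continuous.continuousOn
    have : ∀ x : ℝ, 1 + x ^ 2 ≠ 0 := fun x => by positivity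
    exact continuous_const.div (by continuity) this
  · intro x hx
    have hx2 : x ≤ (k : ℝ) / t := hx.2
    have hx1 : ((k : ℝ) - 1) / t ≤ x := hx.1
    have hk1 : (1:ℝ) ≤ (k:ℝ) := by exact_mod_cast hk
    have hx0 : 0 ≤ x := le_trans (div_nonneg (by linarith) ht.le) hx1
    gcongr <;> nlinarith

lemma sum_bound (t : ℝ) (ht : 0 < t) (n : ℕ) :
    ∑ k ∈ Finset.Icc 1 n, 2 * t / (t ^ 2 + (k : ℝ) ^ 2) ≤ π := by
  have h1 : ∑ k ∈ Finset.Icc 1 n, t / (t ^ 2 + (k : ℝ) ^ 2)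
      ≤ ∑ k ∈ Finset.Icc 1 n, (Real.arctan (k / t) - Real.arctan ((k - 1 : ℕ) / t)) := by
    apply Finset.sum_le_sum
    intro k hk
    exact key_ineq t ht k (Finset.mem_Icc.mp hk).1
  have h2 : ∀ m : ℕ, ∑ k ∈ Finset.Icc 1 m,
      (Real.arctan ((k : ℝ) / t) - Real.arctan (((k - 1 : ℕ) : ℝ) / t))
      = Real.arctan ((m : ℝ) / t) := by
    intro m
    induction m with
    | zero => simp
    | succ m ih =>
      rw [Finset.sum_Icc_succ_top (Nat.one_le_iff_ne_zero.mpr (Nat.succ_ne_zero m)), ih]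
      have hm : (m + 1 - 1 : ℕ) = m := rfl
      rw [hm]
      ring
  rw [h2 n] at h1
  have h3 : Real.arctan ((n : ℝ) / t) ≤ π / 2 := le_of_lt (Real.arctan_lt_pi_div_two _)
  have h4 : ∑ k ∈ Finset.Icc 1 n, 2 * t / (t ^ 2 + (k : ℝ) ^ 2)
      = 2 * ∑ k ∈ Finset.Icc 1 n, t / (t ^ 2 + (k : ℝ) ^ 2) := by
    rw [Finset.mul_sum]; congr 1; ext k; ring
  rw [h4]
  linarith

lemma pair_eq (t : ℝ) (k : ℕ) (hk : 1 ≤ k) :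
    ((t : ℂ) + Complex.I * k)⁻¹ + ((t : ℂ) - Complex.I * k)⁻¹
      = ((2 * t / (t ^ 2 + (k : ℝ) ^ 2) : ℝ) : ℂ) := by
  have hk0 : (k : ℝ) ≠ 0 := Nat.cast_ne_zero.mpr (by omega)
  have hd : (t : ℝ) ^ 2 + (k : ℝ) ^ 2 ≠ 0 := by positivity
  have h1 : ((t : ℂ) + Complex.I * k) ≠ 0 := by
    intro h
    have := congrArg Complex.im h
    simp at this
    exact absurd this (by omega)
  have h2 : ((t : ℂ) - Complex.I * k) ≠ 0 := by
    intro h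
    have := congrArg Complex.im h
    simp at this
    exact absurd this (by omega)
  have hd' : ((t : ℂ) ^ 2 + (k : ℂ) ^ 2) ≠ 0 := by
    have he : ((t : ℂ) ^ 2 + (k : ℂ) ^ 2) = ((t ^ 2 + (k:ℝ) ^ 2 : ℝ) : ℂ) := by push_cast; ring
    rw [he]
    exact_mod_cast hd
  field_simp
  ring_nf
  rw [Complex.I_sq]
  ring
  push_cast
  linear_combination (-(t:ℂ)*2) * mul_inv_cancel₀ hd'

/-- For `g₊(t) = ∑_{k=1}^n 1/(t + i k)` and `g₋(t) = ∑_{k=1}^n 1/(t − i k)`,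
the sum `g = g₊ + g₋` is bounded by `π` on `ℝ`, while
`|g₋(0)| = ∑_{k=1}^n 1/k ≥ log n`; hence `sup|g₋| / sup|g| ≥ (log n)/π`. -/
theorem simple_fractions_log_example (n : ℕ) (hn : 1 ≤ n) :
    (∀ t : ℝ,
        ‖(∑ k ∈ Finset.Icc 1 n, ((t : ℂ) + Complex.I * k)⁻¹ +
          ∑ k ∈ Finset.Icc 1 n, ((t : ℂ) - Complex.I * k)⁻¹)‖ ≤ π) ∧
    ‖(∑ k ∈ Finset.Icc 1 n, ((0 : ℂ) - Complex.I * k)⁻¹)‖ =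
      ∑ k ∈ Finset.Icc 1 n, (1 : ℝ) / k ∧
    Real.log n ≤ ∑ k ∈ Finset.Icc 1 n, (1 : ℝ) / k := by
  refine ⟨?_, ?_, ?_⟩
  · intro t
    have hsum : ∑ k ∈ Finset.Icc 1 n, ((t : ℂ) + Complex.I * k)⁻¹ +
          ∑ k ∈ Finset.Icc 1 n, ((t : ℂ) - Complex.I * k)⁻¹
        = ((∑ k ∈ Finset.Icc 1 n, 2 * t / (t ^ 2 + (k : ℝ) ^ 2) : ℝ) : ℂ) := by
      rw [← Finset.sum_add_distrib]
      push_cast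
      apply Finset.sum_congr rfl
      intro k hk
      have := pair_eq t k (Finset.mem_Icc.mp hk).1
      push_cast at this
      exact this
    rw [hsum, Complex.norm_real, Real.norm_eq_abs]
    calc |∑ k ∈ Finset.Icc 1 n, 2 * t / (t ^ 2 + (k : ℝ) ^ 2)|
        ≤ ∑ k ∈ Finset.Icc 1 n, |2 * t / (t ^ 2 + (k : ℝ) ^ 2)| :=
          Finset.abs_sum_le_sum_abs _ _
      _ = ∑ k ∈ Finset.Icc 1 n, 2 * |t| / (|t| ^ 2 + (k : ℝ) ^ 2) := by
          apply Finset.sum_congr rfl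
          intro k hk
          have hk1 : 1 ≤ k := (Finset.mem_Icc.mp hk).1
          have hd : (0:ℝ) < t ^ 2 + (k : ℝ) ^ 2 := by
            have : (0:ℝ) < (k:ℝ)^2 := by positivity
            positivity
          rw [abs_div, abs_of_pos hd, abs_mul, ← _root_.sq_abs t]
          norm_num
      _ ≤ π := by
          rcases eq_or_lt_of_le (abs_nonneg t) with h | h
          · simp [← h]
            exact Real.pi_nonneg
          · exact sum_bound |t| h n
  · have h1 : ∀ k ∈ Finset.Icc 1 n, ((0 : ℂ) - Complex.I * k)⁻¹ = Complex.I * ((k : ℝ)⁻¹ : ℝ) := by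
      intro k hk
      have hk0 : (k : ℂ) ≠ 0 := Nat.cast_ne_zero.mpr (by have := (Finset.mem_Icc.mp hk).1; omega)
      push_cast
      rw [zero_sub, ← neg_inv, mul_inv, Complex.inv_I]
      ring
    rw [Finset.sum_congr rfl h1, ← Finset.mul_sum, ← Complex.ofReal_sum, norm_mul,
      Complex.norm_I, one_mul, Complex.norm_real, Real.norm_eq_abs]
    rw [_root_.abs_of_nonneg (Finset.sum_nonneg fun k _ => by positivity)]
    apply Finset.sum_congr rfl
    intro k _
    rw [one_div]
  · have h := log_add_one_le_harmonic n
    have h2 : (harmonic n : ℝ) = ∑ k ∈ Finset.Icc 1 n, (1 : ℝ) / k := by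
      rw [harmonic_eq_sum_Icc]
      push_cast
      simp [one_div]
    rw [h2] at h
    refine le_trans ?_ h
    apply Real.log_le_log (by positivity)
    push_cast; linarith
end

section
/- The Borel transform acts on Taylor coefficients as follows: if f(w) = Σ_{n≥0} a_n/w^{n+1} converges for |w| > R, and γ is a positively oriented circle of radius r > R centered at 0, then F(z) := (1/2πi)∮_γ f(w)e^{wz} dw = Σ_{n≥0} (a_n/n!) z^n, and F is an entire function of exponential type at most R. -/
open Complex Metric

/-- Coefficient bound: if `∑ aₙ/w^{n+1}` converges for `‖w‖ = ρ`, then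
`‖aₙ‖ ≤ C ρ^{n+1}` for some `C > 0`. -/
lemma borel_aux_coeff (R : ℝ) (hR : 0 ≤ R) (a : ℕ → ℂ) (f : ℂ → ℂ)
    (hf : ∀ w : ℂ, R < ‖w‖ → HasSum (fun n => a n / w ^ (n + 1)) (f w))
    (ρ : ℝ) (hρ : R < ρ) : ∃ C > (0 : ℝ), ∀ n : ℕ, ‖a n‖ ≤ C * ρ ^ (n + 1) := by
  have hρ0 : 0 < ρ := lt_of_le_of_lt hR hρ
  have hwn : ‖(ρ : ℂ)‖ = ρ := by
    simp [Complex.norm_real, abs_of_pos hρ0]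
  have hs := (hf (ρ : ℂ) (by rw [hwn]; exact hρ)).summable
  have h0 : Filter.Tendsto (fun n => ‖a n / (ρ : ℂ) ^ (n + 1)‖) Filter.atTop (nhds 0) := by
    simpa using hs.tendsto_atTop_zero.norm
  obtain ⟨C, hC⟩ := h0.bddAbove_range
  refine ⟨max C 1, lt_of_lt_of_le one_pos (le_max_right _ _), fun n => ?_⟩
  have h1 : ‖a n / (ρ : ℂ) ^ (n + 1)‖ ≤ C := hC (Set.mem_range_self n)
  have h2 : ‖a n / (ρ : ℂ) ^ (n + 1)‖ = ‖a n‖ / ρ ^ (n + 1) := by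
    rw [norm_div, norm_pow, hwn]
  rw [h2] at h1
  have hpow : (0 : ℝ) < ρ ^ (n + 1) := pow_pos hρ0 _
  calc ‖a n‖ = ‖a n‖ / ρ ^ (n + 1) * ρ ^ (n + 1) := by field_simp
    _ ≤ C * ρ ^ (n + 1) := by gcongr
    _ ≤ max C 1 * ρ ^ (n + 1) := by gcongr; exact le_max_left _ _

/-- The key circle integral: `∮_{|w|=r} e^{wz}/w^{n+1} dw = 2πi zⁿ/n!`. -/
lemma borel_aux_integral (r : ℝ) (hr : 0 < r) (z : ℂ) (n : ℕ) :
    (∮ w in C(0, r), Complex.exp (w * z) / w ^ (n + 1)) =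
      2 * Real.pi * Complex.I * (z ^ n / (n.factorial : ℂ)) := by
  set g : ℂ → ℂ := fun w => Complex.exp (w * z) with hg
  set p : FormalMultilinearSeries ℂ ℂ ℂ := fun m =>
    ContinuousMultilinearMap.mkPiRing ℂ (Fin m) (z ^ m / (m.factorial : ℂ)) with hpdef
  have hrc : ((r.toNNReal : ℝ)) = r := Real.coe_toNNReal _ hr.le
  have hpnorm : ∀ m : ℕ, ‖p m‖ = ‖z‖ ^ m / (m.factorial : ℝ) := by
    intro m
    rw [hpdef]
    rw [ContinuousMultilinearMap.norm_mkPiRing, norm_div, norm_pow]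
    simp
  have hpr : (r.toNNReal : ENNReal) ≤ p.radius := by
    apply p.le_radius_of_summable
    have hs : Summable (fun m : ℕ => (‖z‖ * r) ^ m / (m.factorial : ℝ)) :=
      Real.summable_pow_div_factorial _
    refine hs.congr fun m => ?_
    rw [hpnorm m, hrc, mul_pow]
    ring
  have hp : HasFPowerSeriesOnBall g p 0 r.toNNReal := by
    refine ⟨hpr, by exact_mod_cast Real.toNNReal_pos.mpr hr, fun {y} _ => ?_⟩
    have hes : HasSum (fun m : ℕ => (y * z) ^ m / (m.factorial : ℂ))
        (Complex.exp (y * z)) := by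
      rw [Complex.exp_eq_exp_ℂ]
      exact NormedSpace.expSeries_div_hasSum_exp (y * z)
    have : g (0 + y) = Complex.exp (y * z) := by simp [hg]
    rw [this]
    refine hes.congr_fun fun m => ?_
    rw [hpdef]
    simp only [ContinuousMultilinearMap.mkPiRing_apply, Fin.prod_const, smul_eq_mul]
    rw [mul_pow]
    ring
  have hgd : DifferentiableOn ℂ g (closedBall (0 : ℂ) r.toNNReal) :=
    ((differentiable_id.mul_const z).cexp).differentiableOn
  have hq : HasFPowerSeriesOnBall g (cauchyPowerSeries g 0 r.toNNReal) 0 r.toNNReal :=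
    hgd.hasFPowerSeriesOnBall (Real.toNNReal_pos.mpr hr)
  have hpq : p = cauchyPowerSeries g 0 r.toNNReal :=
    hp.hasFPowerSeriesAt.eq_formalMultilinearSeries hq.hasFPowerSeriesAt
  have h1 : p n (fun _ => (1 : ℂ)) = cauchyPowerSeries g 0 r.toNNReal n (fun _ => 1) := by
    rw [hpq]
  rw [cauchyPowerSeries_apply] at h1
  have hL : p n (fun _ => (1 : ℂ)) = z ^ n / (n.factorial : ℂ) := by
    rw [hpdef]
    simp [ContinuousMultilinearMap.mkPiRing_apply]
  have hint : (∮ w in C(0, (r.toNNReal : ℝ)), ((1 : ℂ) / (w - 0)) ^ n • ((w - 0)⁻¹ • g w))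
      = ∮ w in C(0, r), Complex.exp (w * z) / w ^ (n + 1) := by
    rw [hrc]
    refine circleIntegral.integral_congr hr.le fun w hw => ?_
    have hw0 : w ≠ 0 := by
      intro h
      rw [Metric.mem_sphere, h] at hw
      simp at hw
      exact hr.ne' hw.symm
    simp only [sub_zero, smul_eq_mul, one_div, hg]
    rw [inv_pow, pow_succ]
    field_simp
  rw [hint] at h1
  rw [hL] at h1
  have h2πI : (2 * Real.pi * Complex.I : ℂ) ≠ 0 := Complex.two_pi_I_ne_zero
  rw [smul_eq_mul] at h1
  field_simp at h1 ⊢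
  rw [show (fun w : ℂ => cexp (z * w) / w ^ (n + 1)) = (fun w => cexp (w * z) / w ^ (n + 1))
    from funext fun w => by rw [mul_comm z w], ← h1]

/-- The Borel transform acts on Taylor coefficients: if `f(w) = ∑ aₙ/w^{n+1}` for
`|w| > R` and `γ` is the circle `|w| = r` with `r > R`, then
`F(z) = (2πi)⁻¹ ∮_γ f(w) e^{wz} dw = ∑ (aₙ/n!) zⁿ`, and `F` is an entire function
of exponential type at most `R`. -/
theorem borel_transform_taylor_coeff
    (R : ℝ) (hR : 0 ≤ R) (a : ℕ → ℂ) (f : ℂ → ℂ)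
    (hf : ∀ w : ℂ, R < ‖w‖ → HasSum (fun n => a n / w ^ (n + 1)) (f w))
    (r : ℝ) (hr : R < r) :
    (∀ z : ℂ,
        (2 * Real.pi * Complex.I : ℂ)⁻¹ *
            circleIntegral (fun w => f w * Complex.exp (w * z)) 0 r =
          ∑' n : ℕ, a n / (n.factorial : ℂ) * z ^ n) ∧
    (∀ ε > (0 : ℝ), ∃ C > (0 : ℝ), ∀ z : ℂ,
        ‖∑' n : ℕ, a n / (n.factorial : ℂ) * z ^ n‖ ≤ C * Real.exp ((R + ε) * ‖z‖)) := by
  have hr0 : 0 < r := lt_of_le_of_lt hR hr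
  set ρ : ℝ := (R + r) / 2 with hρdef
  have hρR : R < ρ := by rw [hρdef]; linarith
  have hρr : ρ < r := by rw [hρdef]; linarith
  have hρ0 : 0 < ρ := lt_of_le_of_lt hR hρR
  obtain ⟨C, hC0, hC⟩ := borel_aux_coeff R hR a f hf ρ hρR
  have hwcirc : ∀ θ : ℝ, ‖circleMap 0 r θ‖ = r := by
    intro θ
    simp [norm_circleMap_zero, abs_of_pos hr0]
  have hwne : ∀ θ : ℝ, circleMap 0 r θ ≠ 0 := fun θ => circleMap_ne_center hr0.ne'
  have key : ∀ z : ℂ, HasSum (fun n => a n / (n.factorial : ℂ) * z ^ n)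
      ((2 * Real.pi * Complex.I : ℂ)⁻¹ *
        circleIntegral (fun w => f w * Complex.exp (w * z)) 0 r) := by
    intro z
    have hsum : HasSum
        (fun n => ∮ w in C(0, r), a n / w ^ (n + 1) * Complex.exp (w * z))
        (∮ w in C(0, r), f w * Complex.exp (w * z)) := by
      simp only [circleIntegral]
      refine intervalIntegral.hasSum_integral_of_dominated_convergence
        (fun n _ => r * (C * ρ ^ (n + 1) / r ^ (n + 1) * Real.exp (r * ‖z‖)))
        (fun n => ?_) (fun n => ?_) ?_ ?_ ?_
      · apply Continuous.aestronglyMeasurable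
        simp only [deriv_circleMap]
        exact ((continuous_circleMap 0 r).mul continuous_const).smul
          ((continuous_const.div ((continuous_circleMap 0 r).pow _)
            (fun θ => pow_ne_zero _ (hwne θ))).mul
            (((continuous_circleMap 0 r).mul continuous_const).cexp))
      · refine Filter.Eventually.of_forall fun θ _ => ?_
        have e1 : ‖deriv (circleMap 0 r) θ‖ = r := by
          rw [deriv_circleMap, norm_mul, Complex.norm_I, hwcirc θ, mul_one]
        have e2 : ‖(circleMap 0 r θ) ^ (n + 1)‖ = r ^ (n + 1) := by
          rw [norm_pow, hwcirc θ]
        have e3 : ‖Complex.exp (circleMap 0 r θ * z)‖ ≤ Real.exp (r * ‖z‖) := by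
          rw [Complex.norm_exp]
          apply Real.exp_le_exp.2
          calc (circleMap 0 r θ * z).re ≤ ‖circleMap 0 r θ * z‖ :=
                Complex.re_le_norm _
            _ = r * ‖z‖ := by
                rw [norm_mul, hwcirc θ]
        rw [norm_smul, e1, norm_mul, norm_div, e2]
        show r * (‖a n‖ / r ^ (n + 1) * ‖Complex.exp (circleMap 0 r θ * z)‖) ≤
          r * (C * ρ ^ (n + 1) / r ^ (n + 1) * Real.exp (r * ‖z‖))
        gcongr
        exact hC n
      · refine Filter.Eventually.of_forall fun θ _ => ?_
        have hgeom : Summable (fun n : ℕ => (ρ / r) ^ n) :=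
          summable_geometric_of_lt_one (by positivity)
            (by rw [div_lt_one hr0]; exact hρr)
        refine ((hgeom.mul_left (r * (C * ρ / r * Real.exp (r * ‖z‖))))).congr fun n => ?_
        rw [div_pow]
        field_simp
        ring
      · exact intervalIntegrable_const
      · refine Filter.Eventually.of_forall fun θ _ => ?_
        have hfw : HasSum (fun n => a n / (circleMap 0 r θ) ^ (n + 1))
            (f (circleMap 0 r θ)) := hf _ (by rw [hwcirc θ]; exact hr)
        exact (hfw.mul_right _).const_smul _
    have hterm : ∀ n : ℕ,
        (∮ w in C(0, r), a n / w ^ (n + 1) * Complex.exp (w * z))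
          = a n * (2 * Real.pi * Complex.I) * (z ^ n / (n.factorial : ℂ)) := by
      intro n
      have heq : (fun w : ℂ => a n / w ^ (n + 1) * Complex.exp (w * z))
          = fun w => a n • (Complex.exp (w * z) / w ^ (n + 1)) := by
        funext w
        simp only [smul_eq_mul]
        ring
      rw [heq, circleIntegral.integral_smul, borel_aux_integral r hr0 z n,
        smul_eq_mul]
      ring
    have h2 := hsum.mul_left ((2 * Real.pi * Complex.I : ℂ)⁻¹)
    refine h2.congr_fun fun n => ?_
    rw [hterm n]
    have h2πI : (2 * Real.pi * Complex.I : ℂ) ≠ 0 := Complex.two_pi_I_ne_zero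
    have hfact : ((n.factorial : ℂ)) ≠ 0 := Nat.cast_ne_zero.mpr n.factorial_ne_zero
    field_simp
  constructor
  · intro z
    exact ((key z).tsum_eq).symm
  · intro ε hε
    obtain ⟨C₁, hC₁0, hC₁⟩ := borel_aux_coeff R hR a f hf (R + ε) (by linarith)
    have hRε : 0 < R + ε := by linarith
    refine ⟨C₁ * (R + ε), by positivity, fun z => ?_⟩
    have hmaj : Summable (fun n : ℕ =>
        C₁ * (R + ε) * (((R + ε) * ‖z‖) ^ n / (n.factorial : ℝ))) :=
      (Real.summable_pow_div_factorial _).mul_left _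
    have hbd : ∀ n : ℕ, ‖a n / (n.factorial : ℂ) * z ^ n‖ ≤
        C₁ * (R + ε) * (((R + ε) * ‖z‖) ^ n / (n.factorial : ℝ)) := by
      intro n
      rw [norm_mul, norm_div, norm_pow]
      have hnf : ‖((n.factorial : ℂ))‖ = (n.factorial : ℝ) := by
        simp
      rw [hnf]
      have hfac : (0 : ℝ) < (n.factorial : ℝ) := by
        exact_mod_cast n.factorial_pos
      rw [mul_pow]
      have : C₁ * (R + ε) * ((R + ε) ^ n * ‖z‖ ^ n / (n.factorial : ℝ))
          = C₁ * (R + ε) ^ (n + 1) / (n.factorial : ℝ) * ‖z‖ ^ n := by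
        rw [pow_succ]
        ring
      rw [this]
      gcongr
      exact hC₁ n
    have hnorm_summable : Summable (fun n : ℕ => ‖a n / (n.factorial : ℂ) * z ^ n‖) :=
      Summable.of_nonneg_of_le (fun n => norm_nonneg _) hbd hmaj
    have hexp : HasSum (fun n : ℕ => ((R + ε) * ‖z‖) ^ n / (n.factorial : ℝ))
        (Real.exp ((R + ε) * ‖z‖)) := by
      rw [Real.exp_eq_exp_ℝ]
      exact NormedSpace.expSeries_div_hasSum_exp _
    calc ‖∑' n : ℕ, a n / (n.factorial : ℂ) * z ^ n‖
        ≤ ∑' n : ℕ, ‖a n / (n.factorial : ℂ) * z ^ n‖ :=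
          norm_tsum_le_tsum_norm hnorm_summable
      _ ≤ ∑' n : ℕ, C₁ * (R + ε) * (((R + ε) * ‖z‖) ^ n / (n.factorial : ℝ)) :=
          Summable.tsum_le_tsum hbd hnorm_summable hmaj
      _ = C₁ * (R + ε) * Real.exp ((R + ε) * ‖z‖) := by
          rw [(hexp.mul_left (C₁ * (R + ε))).tsum_eq]
end
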